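/- arXiv:2106.03235 — 3 statements merged into one kernel-verified Lean document; each statement's English description precedes it below -/
import Mathlib

section
/- Let Φ be a real n×m matrix with full column rank, y ∈ ℝ^n, and let x̂ ∈ ℝ^m be the (unique) minimizer of z ↦ ‖y − Φz‖₂ over ℝ^m. For each index i, set γ_i = ((ΦᵀΦ)⁻¹)_{ii}. Then the increase in squared residual caused by forcing coordinate i to zero satisfies: (min over z ∈ ℝ^m with z_i = 0 of ‖y − Φz‖₂²) − ‖y − Φx̂‖₂² = x̂_i² / γ_i. -/
open Matrix

/-- The Euclidean (ℓ₂) norm of a finitely indexed real vector. -/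
noncomputable def euclidNorm {ι : Type*} [Fintype ι] (v : ι → ℝ) : ℝ :=
  ‖(WithLp.equiv 2 (ι → ℝ)).symm v‖

lemma enorm_sq {ι : Type*} [Fintype ι] (v : ι → ℝ) : euclidNorm v ^ 2 = v ⬝ᵥ v := by
  have h : euclidNorm v = Real.sqrt (∑ j, ‖v j‖ ^ 2) := by
    rw [euclidNorm]
    exact EuclideanSpace.norm_eq ((WithLp.equiv 2 (ι → ℝ)).symm v)
  rw [h, Real.sq_sqrt (by positivity)]
  simp [dotProduct, sq]

lemma enorm_nonneg' {ι : Type*} [Fintype ι] (v : ι → ℝ) : 0 ≤ euclidNorm v :=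
  norm_nonneg _

/-- for a full-column-rank `Φ` and the least-squares minimizer `xhat`,
the increase in squared residual caused by forcing coordinate `i` to zero equals
`xhat i ^ 2 / γ i`, where `γ i = ((ΦᵀΦ)⁻¹)_{ii}`. -/
theorem backward_deletion_residual_increase {n m : ℕ}
    (Φ : Matrix (Fin n) (Fin m) ℝ)
    (hΦ : Function.Injective Φ.mulVec)
    (y : Fin n → ℝ) (xhat : Fin m → ℝ)
    (hxhat : ∀ z : Fin m → ℝ, euclidNorm (y - Φ.mulVec xhat) ≤ euclidNorm (y - Φ.mulVec z))
    (i : Fin m) :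
    sInf {c : ℝ | ∃ z : Fin m → ℝ, z i = 0 ∧ c = (euclidNorm (y - Φ.mulVec z)) ^ 2}
      - (euclidNorm (y - Φ.mulVec xhat)) ^ 2
      = (xhat i) ^ 2 / ((Φᵀ * Φ)⁻¹ i i) := by
  classical
  set A := Φᵀ * Φ with hAdef
  set r := y - Φ.mulVec xhat with hrdef
  -- quadratic form identity
  have hquad : ∀ x : Fin m → ℝ, x ⬝ᵥ A.mulVec x = (Φ.mulVec x) ⬝ᵥ (Φ.mulVec x) := by
    intro x
    rw [hAdef, ← mulVec_mulVec, dotProduct_mulVec, vecMul_transpose]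
  have hdotAw : ∀ v w : Fin m → ℝ, v ⬝ᵥ A.mulVec w = (Φ.mulVec v) ⬝ᵥ (Φ.mulVec w) := by
    intro v w
    rw [hAdef, ← mulVec_mulVec, dotProduct_mulVec, vecMul_transpose]
  -- positive definiteness
  have hA : A.PosDef := by
    refine PosDef.of_dotProduct_mulVec_pos (by simpa [conjTranspose_eq_transpose_of_trivial] using isHermitian_conjTranspose_mul_self Φ) fun x hx => ?_
    have hΦx : Φ.mulVec x ≠ 0 := by
      intro h
      exact hx (hΦ (by simpa [mulVec_zero] using h))
    have hnn : (0:ℝ) ≤ (Φ.mulVec x) ⬝ᵥ (Φ.mulVec x) :=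
      Finset.sum_nonneg fun j _ => mul_self_nonneg _
    have hne : (Φ.mulVec x) ⬝ᵥ (Φ.mulVec x) ≠ 0 := fun h => hΦx (dotProduct_self_eq_zero.mp h)
    simpa [star_trivial, hquad x] using lt_of_le_of_ne hnn (Ne.symm hne)
  have hAdet : IsUnit A.det := (Matrix.isUnit_iff_isUnit_det A).mp hA.isUnit
  have hAA : A * A⁻¹ = 1 := Matrix.mul_nonsing_inv A hAdet
  have hAsymm : Aᵀ = A := by
    have := hA.1
    rwa [Matrix.IsHermitian, conjTranspose_eq_transpose_of_trivial] at this
  set γ := A⁻¹ i i with hγdef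
  set b := A⁻¹.mulVec (Pi.single i 1) with hbdef
  have hbi : b i = γ := by
    simp [hbdef, mulVec_single, hγdef]
  have hAb : A.mulVec b = Pi.single i 1 := by
    rw [hbdef, mulVec_mulVec, hAA, one_mulVec]
  -- b ⬝ᵥ A w = w i
  have hbAw : ∀ w : Fin m → ℝ, b ⬝ᵥ A.mulVec w = w i := by
    intro w
    rw [dotProduct_mulVec, ← mulVec_transpose, hAsymm, hAb, single_dotProduct, one_mul]
  have hbAb : b ⬝ᵥ A.mulVec b = γ := by rw [hbAw, hbi]
  have hγpos : 0 < γ := by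
    have hsing : (Pi.single i 1 : Fin m → ℝ) ≠ 0 := by
      intro h
      have h1 : (Pi.single i 1 : Fin m → ℝ) i = 0 := by rw [h]; rfl
      simp at h1
    have h2 := hA.inv.dotProduct_mulVec_pos hsing
    rw [star_trivial, single_dotProduct, one_mul, ← hbdef, hbi] at h2
    exact h2
  -- orthogonality of residual
  have hortho : ∀ v : Fin m → ℝ, (Φ.mulVec v) ⬝ᵥ r = 0 := by
    intro v
    have hd0 : 0 ≤ (Φ.mulVec v) ⬝ᵥ (Φ.mulVec v) :=
      Finset.sum_nonneg fun j _ => mul_self_nonneg _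
    have key : ∀ t : ℝ, 0 ≤ ((Φ.mulVec v) ⬝ᵥ (Φ.mulVec v)) * (t * t)
        + (-2 * ((Φ.mulVec v) ⬝ᵥ r)) * t + 0 := by
      intro t
      have h := hxhat (xhat + t • v)
      have h2 : euclidNorm r ^ 2 ≤ euclidNorm (y - Φ.mulVec (xhat + t • v)) ^ 2 :=
        pow_le_pow_left₀ (enorm_nonneg' r) h 2
      have heq : y - Φ.mulVec (xhat + t • v) = r - t • Φ.mulVec v := by
        rw [mulVec_add, mulVec_smul, hrdef]
        abel
      rw [heq, enorm_sq, enorm_sq] at h2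
      have hcomm : r ⬝ᵥ Φ.mulVec v = Φ.mulVec v ⬝ᵥ r := dotProduct_comm _ _
      have hexp : (r - t • Φ.mulVec v) ⬝ᵥ (r - t • Φ.mulVec v)
          = r ⬝ᵥ r - 2 * t * ((Φ.mulVec v) ⬝ᵥ r)
            + t ^ 2 * ((Φ.mulVec v) ⬝ᵥ (Φ.mulVec v)) := by
        simp only [sub_dotProduct, dotProduct_sub, smul_dotProduct, dotProduct_smul,
          smul_eq_mul, hcomm]
        ring
      rw [hexp] at h2
      nlinarith
    have hdisc := discrim_le_zero key
    rw [discrim] at hdisc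
    nlinarith
  -- Pythagoras
  have hpyth : ∀ z : Fin m → ℝ,
      (y - Φ.mulVec z) ⬝ᵥ (y - Φ.mulVec z) = r ⬝ᵥ r + (z - xhat) ⬝ᵥ A.mulVec (z - xhat) := by
    intro z
    have heq : y - Φ.mulVec z = r - Φ.mulVec (z - xhat) := by
      rw [mulVec_sub, hrdef]
      abel
    have h0 := hortho (z - xhat)
    have hcomm : r ⬝ᵥ Φ.mulVec (z - xhat) = 0 := by rw [dotProduct_comm]; exact h0
    rw [heq, hdotAw]
    simp only [sub_dotProduct, dotProduct_sub]
    rw [hcomm, h0]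
    ring
  -- lower bound for constrained quadratic form
  have hlow : ∀ w : Fin m → ℝ, w i = -xhat i →
      (xhat i) ^ 2 / γ ≤ w ⬝ᵥ A.mulVec w := by
    intro w hw
    have hcs := Finset.sum_mul_sq_le_sq_mul_sq Finset.univ (Φ.mulVec b) (Φ.mulVec w)
    have h1 : (Φ.mulVec b) ⬝ᵥ (Φ.mulVec w) = w i := by rw [← hdotAw, hbAw]
    have h2 : (Φ.mulVec b) ⬝ᵥ (Φ.mulVec b) = γ := by rw [← hdotAw, hbAb]
    have h3 : (Φ.mulVec w) ⬝ᵥ (Φ.mulVec w) = w ⬝ᵥ A.mulVec w := (hdotAw w w).symm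
    have hcs' : (w i) ^ 2 ≤ γ * (w ⬝ᵥ A.mulVec w) := by
      calc (w i) ^ 2 = ((Φ.mulVec b) ⬝ᵥ (Φ.mulVec w)) ^ 2 := by rw [h1]
        _ = (∑ j, Φ.mulVec b j * Φ.mulVec w j) ^ 2 := rfl
        _ ≤ (∑ j, Φ.mulVec b j ^ 2) * (∑ j, Φ.mulVec w j ^ 2) := hcs
        _ = ((Φ.mulVec b) ⬝ᵥ (Φ.mulVec b)) * ((Φ.mulVec w) ⬝ᵥ (Φ.mulVec w)) := by
            simp [dotProduct, sq]
        _ = γ * (w ⬝ᵥ A.mulVec w) := by rw [h2, h3]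
    rw [div_le_iff₀ hγpos]
    calc (xhat i) ^ 2 = (w i) ^ 2 := by rw [hw]; ring
      _ ≤ γ * (w ⬝ᵥ A.mulVec w) := hcs'
      _ = (w ⬝ᵥ A.mulVec w) * γ := mul_comm _ _
  -- the minimizing point
  set w₀ : Fin m → ℝ := (-(xhat i) / γ) • b with hw₀def
  have hw₀i : w₀ i = -xhat i := by
    rw [hw₀def]
    simp only [Pi.smul_apply, smul_eq_mul, hbi]
    field_simp
  have hw₀val : w₀ ⬝ᵥ A.mulVec w₀ = (xhat i) ^ 2 / γ := by
    rw [hw₀def, smul_dotProduct, mulVec_smul, dotProduct_smul, hbAb]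
    simp only [smul_eq_mul]
    field_simp
  set S := {c : ℝ | ∃ z : Fin m → ℝ, z i = 0 ∧ c = (euclidNorm (y - Φ.mulVec z)) ^ 2} with hSdef
  have hmem : r ⬝ᵥ r + (xhat i) ^ 2 / γ ∈ S := by
    refine ⟨xhat + w₀, by simp [Pi.add_apply, hw₀i], ?_⟩
    rw [enorm_sq]
    conv_rhs => rw [hpyth (xhat + w₀), add_sub_cancel_left, hw₀val]
  have hlb : ∀ c ∈ S, r ⬝ᵥ r + (xhat i) ^ 2 / γ ≤ c := by
    rintro c ⟨z, hz, rfl⟩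
    rw [enorm_sq]
    conv_rhs => rw [hpyth z]
    have hzi : (z - xhat) i = -xhat i := by simp [hz]
    linarith [hlow (z - xhat) hzi]
  have hsInf : sInf S = r ⬝ᵥ r + (xhat i) ^ 2 / γ := by
    apply le_antisymm
    · exact csInf_le ⟨_, hlb⟩ hmem
    · exact le_csInf ⟨_, hmem⟩ hlb
  rw [hsInf, enorm_sq]
  ring
end

section
/- Let Φ be a real n×m matrix with full column rank and let σ > 0 satisfy σ‖v‖₂ ≤ ‖Φv‖₂ for all v ∈ ℝ^m. Suppose y = Φx + ε where x ∈ ℝ^m has support S = supp(x), and assume (σ/2)·min_{i∈S}|x_i| > ‖ε‖₂. Let x̂ be the unique minimizer of z ↦ ‖y − Φz‖₂. Then |x̂_i| > (1/2)·min_{l∈S}|x_l| for every i ∈ S, and |x̂_j| < (1/2)·min_{l∈S}|x_l| for every j ∉ S. -/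
open Matrix

/-- coordinate separation for the full least-squares solution.
If `σ > 0` is a lower singular-value bound for the full-column-rank matrix `Φ`,
`y = Φx + ε` with `(σ/2)·min_{i∈S}|x i| > ‖ε‖₂` where `S = supp x`, then the
least-squares minimizer `xhat` satisfies `|xhat i| > (1/2)·min_{l∈S}|x l|` on `S`
and `|xhat j| < (1/2)·min_{l∈S}|x l|` off `S`. -/
theorem coordinate_separation {n m : ℕ}
    (Φ : Matrix (Fin n) (Fin m) ℝ)
    (hΦ : Function.Injective Φ.mulVec)
    (σ : ℝ) (hσ : 0 < σ)
    (hlow : ∀ v : Fin m → ℝ, σ * euclidNorm v ≤ euclidNorm (Φ.mulVec v))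
    (x : Fin m → ℝ) (ε : Fin n → ℝ) (y : Fin n → ℝ)
    (hy : y = Φ.mulVec x + ε)
    (S : Finset (Fin m)) (hS : ∀ i, i ∈ S ↔ x i ≠ 0) (hne : S.Nonempty)
    (hnoise : σ / 2 * S.inf' hne (fun l => |x l|) > euclidNorm ε)
    (xhat : Fin m → ℝ)
    (hxhat : ∀ z : Fin m → ℝ, euclidNorm (y - Φ.mulVec xhat) ≤ euclidNorm (y - Φ.mulVec z)) :
    (∀ i ∈ S, |xhat i| > 1 / 2 * S.inf' hne (fun l => |x l|)) ∧
    (∀ j ∉ S, |xhat j| < 1 / 2 * S.inf' hne (fun l => |x l|)) := by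
  set M := S.inf' hne (fun l => |x l|) with hMdef
  set v : Fin m → ℝ := xhat - x with hv
  have hxhat_eq : xhat = x + v := by simp [hv]
  set e : EuclideanSpace ℝ (Fin n) := (WithLp.equiv 2 (Fin n → ℝ)).symm ε with he
  set w : EuclideanSpace ℝ (Fin n) :=
    (WithLp.equiv 2 (Fin n → ℝ)).symm (Φ.mulVec v) with hw
  -- minimality along the line x + t • v
  have key : ∀ t : ℝ, ‖e - w‖ ≤ ‖e - t • w‖ := by
    intro t
    have h := hxhat (x + t • v)
    have h1 : y - Φ.mulVec xhat = ε - Φ.mulVec v := by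
      rw [hy, hxhat_eq, Matrix.mulVec_add]; abel
    have h2 : y - Φ.mulVec (x + t • v) = ε - t • Φ.mulVec v := by
      rw [hy, Matrix.mulVec_add, Matrix.mulVec_smul]; abel
    rw [h1, h2] at h
    simpa [euclidNorm, he, hw] using h
  -- conclude ‖w‖ ≤ ‖e‖
  have hwle : ‖w‖ ≤ ‖e‖ := by
    by_cases hw0 : w = 0
    · simp [hw0]
    · have hwpos : (0:ℝ) < ‖w‖ := norm_pos_iff.mpr hw0
      set b : ℝ := inner ℝ e w with hb
      set c : ℝ := ‖w‖ ^ 2 with hcdef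
      have hc : (0:ℝ) < c := by rw [hcdef]; positivity
      have hc' : c ≠ 0 := ne_of_gt hc
      have ht2 : ‖e - w‖ ^ 2 ≤ ‖e - (b / c) • w‖ ^ 2 :=
        pow_le_pow_left₀ (norm_nonneg _) (key (b / c)) 2
      have e1 : ‖e - w‖ ^ 2 = ‖e‖ ^ 2 - 2 * b + c := by
        rw [hcdef, hb, norm_sub_sq_real]
      have e2 : ‖e - (b / c) • w‖ ^ 2
          = ‖e‖ ^ 2 - 2 * (b / c) * b + (b / c) ^ 2 * c := by
        rw [norm_sub_sq_real, real_inner_smul_right, norm_smul, mul_pow,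
          Real.norm_eq_abs, sq_abs, hb, hcdef]
        ring
      rw [e1, e2] at ht2
      have h7 : c - 2 * b ≤ -(b ^ 2 / c) := by
        have hx : -2 * (b / c) * b + (b / c) ^ 2 * c = -(b ^ 2 / c) := by
          field_simp; ring
        linarith [ht2, hx]
      have h9 : (c - 2 * b) * c ≤ -(b ^ 2 / c) * c :=
        mul_le_mul_of_nonneg_right h7 hc.le
      have h10 : -(b ^ 2 / c) * c = -b ^ 2 := by field_simp
      have hsq : (c - b) ^ 2 ≤ 0 := by nlinarith [h9, h10]
      have h11 : (c - b) ^ 2 = 0 := le_antisymm hsq (sq_nonneg _)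
      have h12 : c - b = 0 := pow_eq_zero_iff two_ne_zero |>.mp h11
      have hbc : b = c := by linarith
      have hcs : b ≤ ‖e‖ * ‖w‖ := real_inner_le_norm e w
      have h5 : ‖w‖ * ‖w‖ ≤ ‖e‖ * ‖w‖ := by nlinarith [hbc, hcs]
      exact le_of_mul_le_mul_right h5 hwpos
  -- M > 0
  have heps : euclidNorm ε = ‖e‖ := rfl
  have hM : 0 < M := by nlinarith [norm_nonneg e, hnoise, heps]
  -- σ ‖v‖ ≤ ‖w‖ ≤ ‖e‖ < σ/2 * M
  set vv : EuclideanSpace ℝ (Fin m) := (WithLp.equiv 2 (Fin m → ℝ)).symm v with hvv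
  have hlowv : σ * ‖vv‖ ≤ ‖w‖ := by
    have := hlow v
    simpa [euclidNorm, hvv, hw] using this
  have hvnorm : ‖vv‖ < M / 2 := by
    have : σ * ‖vv‖ < σ / 2 * M := lt_of_le_of_lt (le_trans hlowv hwle)
      (by rw [← heps]; exact hnoise)
    nlinarith [norm_nonneg vv]
  -- coordinatewise bound
  have hcoord : ∀ i : Fin m, |v i| < M / 2 := by
    intro i
    have h1 : |v i| ≤ ‖vv‖ := by
      rw [EuclideanSpace.norm_eq]
      have hvi : ‖vv i‖ = |v i| := by
        simp [hvv, WithLp.equiv_symm_apply, Real.norm_eq_abs]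
      have hsum : ‖vv i‖ ^ 2 ≤ ∑ j, ‖vv j‖ ^ 2 :=
        Finset.single_le_sum (f := fun j => ‖vv j‖ ^ 2)
          (fun j _ => sq_nonneg _) (Finset.mem_univ i)
      calc |v i| = Real.sqrt (‖vv i‖ ^ 2) := by
            rw [Real.sqrt_sq (norm_nonneg _), hvi]
        _ ≤ Real.sqrt (∑ j, ‖vv j‖ ^ 2) := Real.sqrt_le_sqrt hsum
    linarith
  constructor
  · intro i hi
    have hxi : M ≤ |x i| := Finset.inf'_le _ hi
    have hvi := hcoord i
    have : |x i| - |xhat i| ≤ |x i - xhat i| := abs_sub_abs_le_abs_sub _ _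
    have hsub : |x i - xhat i| = |v i| := by
      rw [hv]; simp [abs_sub_comm]
    rw [hsub] at this
    have : 1 / 2 * M < |xhat i| := by linarith
    simpa [hMdef] using this
  · intro j hj
    have hxj : x j = 0 := by
      by_contra hne'
      exact hj ((hS j).mpr hne')
    have hvj := hcoord j
    have : |xhat j| = |v j| := by rw [hv]; simp [hxj]
    rw [this]
    linarith
end

section
/- Let Φ be a real n×m matrix whose columns φ_1,…,φ_m all have unit Euclidean norm, and let 1 ≤ k < m. Define the Babel function μ₁(k) = max over index sets Λ ⊆ {1,…,m} with |Λ| = k and indices i ∉ Λ of Σ_{j∈Λ} |⟨φ_i, φ_j⟩|. Then for every index set A ⊆ {1,…,m} with |A| = k and every eigenvalue λ of the Gram matrix (Φ_A)ᵀΦ_A (the k×k matrix of inner products of the columns indexed by A), one has |1 − λ| ≤ μ₁(k). Equivalently, every singular value σ of Φ_A satisfies |1 − σ²| ≤ μ₁(k). -/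
open Matrix

/-- The Babel function `μ₁(k)`: the maximum, over index sets `Λ` of cardinality `k`
and indices `i ∉ Λ`, of `∑_{j∈Λ} |⟨φ_i, φ_j⟩|`, where `⟨φ_i, φ_j⟩ = (ΦᵀΦ) i j`. -/
noncomputable def babel {n m : ℕ} (Φ : Matrix (Fin n) (Fin m) ℝ) (k : ℕ) : ℝ :=
  sSup {c : ℝ | ∃ Λ : Finset (Fin m), Λ.card = k ∧
    ∃ i, i ∉ Λ ∧ c = ∑ j ∈ Λ, |(Φᵀ * Φ) i j|}

/-- for a dictionary `Φ` with unit-norm columns and `1 ≤ k < m`,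
every eigenvalue `lam` of the Gram matrix of any `k` columns satisfies
`|1 − lam| ≤ μ₁(k)`. -/
theorem gram_eigenvalue_babel_bound {n m : ℕ}
    (Φ : Matrix (Fin n) (Fin m) ℝ)
    (hunit : ∀ j : Fin m, euclidNorm (fun i => Φ i j) = 1)
    (k : ℕ) (hk1 : 1 ≤ k) (hkm : k < m) :
    ∀ A : Finset (Fin m), A.card = k →
      ∀ (lam : ℝ) (v : ↥A → ℝ), v ≠ 0 →
        (Matrix.of fun i j : ↥A => (Φᵀ * Φ) i.1 j.1).mulVec v = lam • v →
        |1 - lam| ≤ babel Φ k := by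
  intro A hA lam v hv hev
  set G := Φᵀ * Φ with hG
  -- diagonal entries are 1
  have hdiag : ∀ j : Fin m, G j j = 1 := by
    intro j
    have h := hunit j
    have hsq : (euclidNorm (fun i => Φ i j)) ^ 2 = ∑ i, Φ i j ^ 2 := by
      simp only [euclidNorm, EuclideanSpace.norm_eq, WithLp.equiv_symm_apply, PiLp.toLp_apply,
        Real.norm_eq_abs, sq_abs]
      rw [Real.sq_sqrt (Finset.sum_nonneg fun i _ => sq_nonneg _)]
    have : ∑ i, Φ i j ^ 2 = 1 := by rw [← hsq, h]; norm_num
    simp [hG, Matrix.mul_apply, Matrix.transpose_apply, ← this, sq]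
  -- eigenvalue setup
  have hAne : A.Nonempty := Finset.card_pos.mp (by omega)
  haveI : Nonempty ↥A := ⟨⟨hAne.choose, hAne.choose_spec⟩⟩
  set M : Matrix ↥A ↥A ℝ := Matrix.of fun i j : ↥A => G i.1 j.1 with hM
  have heig : Module.End.HasEigenvalue (Matrix.toLin' M) lam := by
    apply Module.End.hasEigenvalue_of_hasEigenvector (x := v)
    constructor
    · rw [Module.End.mem_eigenspace_iff, Matrix.toLin'_apply, hev]
    · exact hv
  obtain ⟨i, hi⟩ := eigenvalue_mem_ball heig
  rw [Metric.mem_closedBall] at hi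
  have hMii : M i i = 1 := hdiag i.1
  have hdist : |1 - lam| ≤ ∑ j ∈ Finset.univ.erase i, ‖M i j‖ := by
    rw [abs_sub_comm]
    calc |lam - 1| = dist lam (M i i) := by rw [hMii, Real.dist_eq]
    _ ≤ _ := hi
  -- convert sum over subtype to sum over finset
  have hsum : ∑ j ∈ Finset.univ.erase i, ‖M i j‖ = ∑ j ∈ A.erase i.1, |G i.1 j| := by
    rw [Finset.sum_bij (fun (j : ↥A) _ => j.1)]
    · intro j hj
      simp only [Finset.mem_erase, Finset.mem_univ, and_true] at hj
      exact Finset.mem_erase.mpr ⟨fun h => hj (Subtype.ext h), j.2⟩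
    · intro a ha b hb hab
      exact Subtype.ext hab
    · intro b hb
      rw [Finset.mem_erase] at hb
      exact ⟨⟨b, hb.2⟩, Finset.mem_erase.mpr ⟨fun h => hb.1 (congrArg Subtype.val h), Finset.mem_univ _⟩, rfl⟩
    · intro a _
      simp [hM, Real.norm_eq_abs]
  -- pick ℓ ∉ A
  obtain ⟨ℓ, hℓ⟩ : ∃ ℓ : Fin m, ℓ ∉ A := by
    by_contra h
    push_neg at h
    have : A = Finset.univ := Finset.eq_univ_iff_forall.mpr h
    rw [this, Finset.card_univ, Fintype.card_fin] at hA
    omega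
  set Λ : Finset (Fin m) := insert ℓ (A.erase i.1) with hΛ
  have hℓe : ℓ ∉ A.erase i.1 := fun h => hℓ (Finset.mem_of_mem_erase h)
  have hΛcard : Λ.card = k := by
    rw [hΛ, Finset.card_insert_of_notMem hℓe, Finset.card_erase_of_mem i.2, hA]
    omega
  have hiΛ : i.1 ∉ Λ := by
    rw [hΛ, Finset.mem_insert]
    rintro (h | h)
    · exact hℓ (h ▸ i.2)
    · exact (Finset.mem_erase.mp h).1 rfl
  have hle2 : ∑ j ∈ A.erase i.1, |G i.1 j| ≤ ∑ j ∈ Λ, |G i.1 j| :=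
    Finset.sum_le_sum_of_subset_of_nonneg (Finset.subset_insert _ _)
      (fun j _ _ => abs_nonneg _)
  have hmem : (∑ j ∈ Λ, |G i.1 j|) ∈ {c : ℝ | ∃ Λ : Finset (Fin m), Λ.card = k ∧
      ∃ i, i ∉ Λ ∧ c = ∑ j ∈ Λ, |(Φᵀ * Φ) i j|} := ⟨Λ, hΛcard, i.1, hiΛ, rfl⟩
  have hbdd : BddAbove {c : ℝ | ∃ Λ : Finset (Fin m), Λ.card = k ∧
      ∃ i, i ∉ Λ ∧ c = ∑ j ∈ Λ, |(Φᵀ * Φ) i j|} := by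
    apply Set.Finite.bddAbove
    apply Set.Finite.subset (Set.finite_range
      (fun p : Finset (Fin m) × Fin m => ∑ j ∈ p.1, |(Φᵀ * Φ) p.2 j|))
    rintro c ⟨Λ', _, i', _, rfl⟩
    exact ⟨(Λ', i'), rfl⟩
  have := le_csSup hbdd hmem
  unfold babel
  calc |1 - lam| ≤ ∑ j ∈ A.erase i.1, |G i.1 j| := hdist.trans_eq hsum
    _ ≤ ∑ j ∈ Λ, |G i.1 j| := hle2
    _ ≤ _ := this
end
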